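/- For every positive integer n, the n×n Hankel determinant det( binom(2i+2j+2, i+j+1) + 2·binom(2i+2j+4, i+j+2) + binom(2i+2j+6, i+j+3) )_{i,j=0}^{n−1} equals 2^n · Σ_{j=0}^{n} L_{2j+1}². -/

import Mathlib

/-- The Lucas numbers: `L_0 = 2`, `L_1 = 1`, `L_n = L_{n-1} + L_{n-2}`. -/
def lucas : ℕ → ℤ
  | 0 => 2
  | 1 => 1
  | n+2 => lucas (n+1) + lucas n

namespace HankelLucasAux

open Finset Matrix

open Finset Matrix

lemma lucas_pos : ∀ n, 0 < lucas n
  | 0 => by norm_num [lucas]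
  | 1 => by norm_num [lucas]
  | n+2 => by rw [lucas]; exact add_pos (lucas_pos (n+1)) (lucas_pos n)

lemma lucas_rec4 (k : ℕ) : lucas (k+4) + lucas k = 3 * lucas (k+2) := by
  show lucas (k+2+2) + _ = _
  rw [lucas, show k+2+1 = k+1+2 from rfl, lucas, lucas]
  ring

lemma lucas_one : lucas 1 = 1 := rfl
lemma lucas_three : lucas 3 = 4 := by
  show lucas (1+2) = 4
  rw [lucas]; norm_num [lucas]

/-- guarded binomial `C(2A+1, A-k)` -/
def g (A k : ℕ) : ℕ := if k ≤ A then (2*A+1).choose (A-k) else 0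

lemma g_eq_zero {A k : ℕ} (h : A < k) : g A k = 0 := if_neg (by omega)

lemma g_self (A : ℕ) : g A A = 1 := by simp [g]

lemma choose_symm_g (A k : ℕ) : (2*A+1).choose (A+1+k) = g A k := by
  rcases le_or_gt k A with h | h
  · rw [g, if_pos h, ← Nat.choose_symm (show A+1+k ≤ 2*A+1 by omega)]
    congr 1; omega
  · rw [g, if_neg (by omega), Nat.choose_eq_zero_of_lt (by omega)]

lemma pascal2 (n r : ℕ) :
    (n+2).choose (r+2) = n.choose r + 2 * n.choose (r+1) + n.choose (r+2) := by
  rw [show n+2 = (n+1)+1 from by omega, show r+2 = (r+1)+1 from by omega,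
      Nat.choose_succ_succ (n+1) (r+1), Nat.choose_succ_succ n r,
      Nat.choose_succ_succ n (r+1)]
  ring

lemma g_succ_succ (A k : ℕ) :
    g (A+1) (k+1) = g A k + 2 * g A (k+1) + g A (k+2) := by
  rcases lt_or_ge A k with h | h
  · rw [g_eq_zero (show A + 1 < k + 1 by omega), g_eq_zero h,
      g_eq_zero (show A < k + 1 by omega), g_eq_zero (show A < k + 2 by omega)]
  rcases eq_or_lt_of_le h with rfl | h1
  · rw [g_self, g_eq_zero (show k < k + 1 by omega), g_eq_zero (show k < k + 2 by omega),
      g_self]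
  rcases eq_or_lt_of_le (Nat.succ_le_of_lt h1) with h2 | h2
  · -- A = k+1
    have hA : A = k + 1 := h2.symm
    subst hA
    rw [g_self, g_eq_zero (show k + 1 < k + 2 by omega)]
    have e0 : g (k+1+1) (k+1) = (2*(k+1)+1+2).choose 1 := by
      rw [g, if_pos (by omega)]; congr 1 <;> omega
    have e1 : g (k+1) k = (2*(k+1)+1).choose 1 := by
      rw [g, if_pos (by omega)]; congr 1 <;> omega
    rw [e0, e1, Nat.choose_one_right, Nat.choose_one_right]
  · -- k+2 ≤ A
    obtain ⟨m, rfl⟩ : ∃ m, A = k + 2 + m := ⟨A - (k+2), by omega⟩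
    have e0 : g (k+2+m+1) (k+1) = (2*(k+2+m)+1+2).choose (m+2) := by
      rw [g, if_pos (by omega)]; congr 1 <;> omega
    have e1 : g (k+2+m) k = (2*(k+2+m)+1).choose (m+2) := by
      rw [g, if_pos (by omega)]; congr 1 <;> omega
    have e2 : g (k+2+m) (k+1) = (2*(k+2+m)+1).choose (m+1) := by
      rw [g, if_pos (by omega)]; congr 1 <;> omega
    have e3 : g (k+2+m) (k+2) = (2*(k+2+m)+1).choose m := by
      rw [g, if_pos (by omega)]; congr 1 <;> omega
    rw [e0, e1, e2, e3, pascal2 (2*(k+2+m)+1) m]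
    ring

lemma g_succ_zero (A : ℕ) : g (A+1) 0 = 3 * g A 0 + g A 1 := by
  rcases Nat.eq_zero_or_pos A with rfl | hA
  · simp [g]
  obtain ⟨m, rfl⟩ : ∃ m, A = m + 1 := ⟨A - 1, by omega⟩
  have e0 : g (m+1+1) 0 = (2*(m+1)+1+2).choose (m+2) := by
    rw [g, if_pos (by omega)]; congr 1 <;> omega
  have e1 : g (m+1) 0 = (2*(m+1)+1).choose (m+1) := by
    rw [g, if_pos (by omega)]; congr 1 <;> omega
  have e2 : g (m+1) 1 = (2*(m+1)+1).choose m := by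
    rw [g, if_pos (by omega)]; congr 1 <;> omega
  have sym : (2*(m+1)+1).choose (m+2) = (2*(m+1)+1).choose (m+1) := by
    rw [← Nat.choose_symm (show m+2 ≤ 2*(m+1)+1 by omega)]
    congr 1; omega
  rw [e0, e1, e2, pascal2 (2*(m+1)+1) m, sym]
  ring


lemma gram (A B N : ℕ) (hA : A < N) (hB : B < N) :
    2 * ∑ k ∈ range N, g A k * g B k = (2*A+2*B+2).choose (A+B+1) := by
  have vdm : (2*A+2*B+2).choose (A+B+1)
      = ∑ i ∈ range (A+B+2), (2*A+1).choose i * (2*B+1).choose (A+B+1-i) := by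
    have h := Nat.add_choose_eq (2*A+1) (2*B+1) (A+B+1)
    rw [Finset.Nat.sum_antidiagonal_eq_sum_range_succ_mk] at h
    rw [show 2*A+2*B+2 = 2*A+1+(2*B+1) by ring, h]
  -- split at A+1
  have split : ∑ i ∈ range (A+B+2), (2*A+1).choose i * (2*B+1).choose (A+B+1-i)
      = (∑ i ∈ range (A+1), (2*A+1).choose i * (2*B+1).choose (A+B+1-i))
        + ∑ i ∈ Ico (A+1) (A+B+2), (2*A+1).choose i * (2*B+1).choose (A+B+1-i) := by
    rw [range_eq_Ico, ← Finset.sum_Ico_consecutive _ (by omega : 0 ≤ A+1) (by omega : A+1 ≤ A+B+2),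
      ← range_eq_Ico]
  -- first sum
  have first : ∑ i ∈ range (A+1), (2*A+1).choose i * (2*B+1).choose (A+B+1-i)
      = ∑ k ∈ range (A+1), g A k * g B k := by
    rw [← Finset.sum_range_reflect]
    refine Finset.sum_congr rfl fun k hk => ?_
    rw [mem_range] at hk
    have h1 : A + 1 - 1 - k = A - k := by omega
    rw [h1]
    have h2 : A + B + 1 - (A - k) = B + 1 + k := by omega
    rw [h2]
    have h3 : (2*A+1).choose (A-k) = g A k := by
      rw [g, if_pos (by omega)]
    rw [h3, choose_symm_g]
  -- second sum
  have second : ∑ i ∈ Ico (A+1) (A+B+2), (2*A+1).choose i * (2*B+1).choose (A+B+1-i)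
      = ∑ k ∈ range (B+1), g A k * g B k := by
    rw [Finset.sum_Ico_eq_sum_range]
    have hc : A + B + 2 - (A + 1) = B + 1 := by omega
    rw [hc]
    refine Finset.sum_congr rfl fun k hk => ?_
    rw [mem_range] at hk
    have h2 : A + B + 1 - (A + 1 + k) = B - k := by omega
    rw [show A + 1 + k = A+1+k from rfl, h2, choose_symm_g]
    congr 1
    rw [g, if_pos (by omega)]
  -- extend both to range N
  have ext1 : ∑ k ∈ range (A+1), g A k * g B k = ∑ k ∈ range N, g A k * g B k := by
    refine Finset.sum_subset (Finset.range_subset_range.2 (by omega)) fun k _ hk => ?_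
    rw [mem_range] at hk
    rw [g_eq_zero (show A < k by omega), zero_mul]
  have ext2 : ∑ k ∈ range (B+1), g A k * g B k = ∑ k ∈ range N, g A k * g B k := by
    refine Finset.sum_subset (Finset.range_subset_range.2 (by omega)) fun k _ hk => ?_
    rw [mem_range] at hk
    rw [g_eq_zero (show B < k by omega), mul_zero]
  rw [vdm, split, first, second, ext1, ext2]
  ring

lemma entry (i j N : ℕ) (hi : i + 1 < N) (hj : j + 1 < N) :
    2 * ∑ k ∈ range N, (g i k + g (i+1) k) * (g j k + g (j+1) k)
      = (2*i+2*j+2).choose (i+j+1) + 2 * (2*i+2*j+4).choose (i+j+2)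
        + (2*i+2*j+6).choose (i+j+3) := by
  have expand : ∀ k, (g i k + g (i+1) k) * (g j k + g (j+1) k)
      = g i k * g j k + g i k * g (j+1) k + g (i+1) k * g j k
        + g (i+1) k * g (j+1) k := fun k => by ring
  rw [Finset.sum_congr rfl fun k _ => expand k]
  rw [Finset.sum_add_distrib, Finset.sum_add_distrib, Finset.sum_add_distrib]
  rw [mul_add, mul_add, mul_add]
  rw [gram i j N (by omega) (by omega), gram i (j+1) N (by omega) (by omega),
    gram (i+1) j N (by omega) (by omega), gram (i+1) (j+1) N (by omega) (by omega)]
  have c1 : 2*i+2*(j+1)+2 = 2*i+2*j+4 := by ring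
  have c2 : 2*(i+1)+2*j+2 = 2*i+2*j+4 := by ring
  have c3 : 2*(i+1)+2*(j+1)+2 = 2*i+2*j+6 := by ring
  have c4 : i+(j+1)+1 = i+j+2 := by ring
  have c5 : (i+1)+j+1 = i+j+2 := by ring
  have c6 : (i+1)+(j+1)+1 = i+j+3 := by ring
  rw [c1, c2, c3, c4, c5, c6]
  ring

noncomputable def lam (k : ℕ) : ℚ := (lucas (2*k+1) : ℚ)

lemma lam_pos (k : ℕ) : 0 < lam k := by
  have := lucas_pos (2*k+1); unfold lam; exact_mod_cast this

lemma lam_ne_zero (k : ℕ) : lam k ≠ 0 := (lam_pos k).ne'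

lemma lam_rec (k : ℕ) : lam (k+2) = 3 * lam (k+1) - lam k := by
  have h := lucas_rec4 (2*k+1)
  unfold lam
  have e1 : 2*(k+2)+1 = 2*k+1+4 := by ring
  have e2 : 2*(k+1)+1 = 2*k+1+2 := by ring
  rw [e1, e2]
  have h' : ((lucas (2*k+1+4) : ℤ) : ℚ) + ((lucas (2*k+1) : ℤ) : ℚ)
      = 3 * ((lucas (2*k+1+2) : ℤ) : ℚ) := by exact_mod_cast congrArg (fun z : ℤ => (z : ℚ)) h
  linarith [h']

lemma lam_zero : lam 0 = 1 := by unfold lam; norm_num [lucas_one]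
lemma lam_one' : lam 1 = 4 := by
  unfold lam; norm_num [lucas_three]

noncomputable def SQ (m : ℕ) : ℚ := ∑ j ∈ range (m+1), lam j ^ 2

lemma SQ_pos (m : ℕ) : 0 < SQ m :=
  Finset.sum_pos (fun j _ => pow_pos (lam_pos j) 2) ⟨0, mem_range.2 (by omega)⟩

lemma SQ_ne_zero (m : ℕ) : SQ m ≠ 0 := (SQ_pos m).ne'

lemma SQ_succ (m : ℕ) : SQ (m+1) = SQ m + lam (m+1) ^ 2 := Finset.sum_range_succ _ _

lemma SQ_zero : SQ 0 = 1 := by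
  unfold SQ; rw [Finset.sum_range_one, lam_zero]; norm_num

noncomputable def XE (i k : ℕ) : ℚ := (g i k : ℚ) + (g (i+1) k : ℚ)
noncomputable def LpE (i k : ℕ) : ℚ := (g i k : ℚ) + lam k / lam (k+1) * (g i (k+1) : ℚ)
noncomputable def pE (a : ℕ) : ℚ := lam (a+1) / lam a
noncomputable def ZE (j k : ℕ) : ℚ := (if j = k then pE j else 0) + (if j + 1 = k then 1 else 0)
noncomputable def dE (a : ℕ) : ℚ := SQ (a+1) / SQ a
noncomputable def tE (a : ℕ) : ℚ := pE (a+1) * (SQ a / SQ (a+1))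
noncomputable def TE (i k : ℕ) : ℚ := (if i = k then 1 else 0) + (if i = k + 1 then tE k else 0)

lemma keyB_zero (iv : ℕ) : XE iv 0 = LpE iv 0 * pE 0 := by
  have hg : ((g (iv+1) 0 : ℕ) : ℚ) = 3 * (g iv 0 : ℚ) + (g iv 1 : ℚ) := by
    exact_mod_cast congrArg (Nat.cast : ℕ → ℚ) (g_succ_zero iv)
  unfold XE LpE pE
  rw [hg, lam_zero, lam_one']
  ring

lemma keyB_succ (iv m : ℕ) : XE iv (m+1) = LpE iv (m+1) * pE (m+1) + LpE iv m := by
  have hg : ((g (iv+1) (m+1) : ℕ) : ℚ)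
      = (g iv m : ℚ) + 2 * (g iv (m+1) : ℚ) + (g iv (m+2) : ℚ) := by
    exact_mod_cast congrArg (Nat.cast : ℕ → ℚ) (g_succ_succ iv m)
  have hrec : lam (m+2) = 3 * lam (m+1) - lam m := lam_rec m
  have h2 : (3 : ℚ) * lam (m+1) - lam m ≠ 0 := by rw [← hrec]; exact lam_ne_zero _
  unfold XE LpE pE
  rw [hg, hrec]
  field_simp [lam_ne_zero]
  rw [mul_add, mul_div_assoc', mul_div_cancel_left₀ _ (by rwa [mul_comm] at h2)]
  ring


lemma LpE_eq_zero {iv kv : ℕ} (h : iv < kv) : LpE iv kv = 0 := by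
  unfold LpE
  rw [g_eq_zero h, g_eq_zero (show iv < kv + 1 by omega)]
  simp

-- entrywise version of X = L * Z
lemma colB (n iv kv : ℕ) (hi : iv < n) (hk : kv ≤ n) :
    ∑ j ∈ range n, LpE iv j * ZE j kv = XE iv kv := by
  have hsum : ∑ j ∈ range n, LpE iv j * ZE j kv
      = (∑ j ∈ range n, if j = kv then LpE iv j * pE j else 0)
        + ∑ j ∈ range n, if j + 1 = kv then LpE iv j else 0 := by
    rw [← Finset.sum_add_distrib]
    refine Finset.sum_congr rfl fun j _ => ?_
    unfold ZE
    rw [mul_add, mul_ite, mul_ite, mul_zero, mul_one]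
  rw [hsum, Finset.sum_ite_eq' (range n) kv (fun j => LpE iv j * pE j)]
  cases kv with
  | zero =>
    rw [Finset.sum_eq_zero (fun j _ => if_neg (by omega)),
      if_pos (mem_range.2 (show 0 < n by omega)), add_zero]
    exact (keyB_zero iv).symm
  | succ m =>
    have hs : (∑ j ∈ range n, if j + 1 = m + 1 then LpE iv j else 0)
        = ∑ j ∈ range n, if j = m then LpE iv j else 0 := by
      refine Finset.sum_congr rfl fun j _ => ?_
      congr 1
      simp
    rw [hs, Finset.sum_ite_eq' (range n) m (fun j => LpE iv j),
      if_pos (mem_range.2 (show m < n by omega))]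
    rcases lt_or_eq_of_le hk with h | h
    · rw [if_pos (mem_range.2 (by omega))]
      exact (keyB_succ iv m).symm
    · rw [if_neg (by simp [mem_range]; omega), zero_add]
      have := keyB_succ iv m
      rw [LpE_eq_zero (show iv < m + 1 by omega), zero_mul, zero_add] at this
      exact this.symm


-- evaluation lemmas
lemma ZE_self (j : ℕ) : ZE j j = pE j := by
  unfold ZE; rw [if_pos rfl, if_neg (by omega), add_zero]
lemma ZE_sup (j : ℕ) : ZE j (j+1) = 1 := by
  unfold ZE; rw [if_neg (by omega), if_pos rfl, zero_add]
lemma ZE_of_ne {j k : ℕ} (h : j ≠ k) (h2 : j + 1 ≠ k) : ZE j k = 0 := by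
  unfold ZE; rw [if_neg h, if_neg h2, add_zero]
lemma TE_self (i : ℕ) : TE i i = 1 := by
  unfold TE; rw [if_pos rfl, if_neg (by omega), add_zero]
lemma TE_sub (k : ℕ) : TE (k+1) k = tE k := by
  unfold TE; rw [if_neg (by omega), if_pos rfl, zero_add]
lemma TE_of_ne {i k : ℕ} (h : i ≠ k) (h2 : i ≠ k + 1) : TE i k = 0 := by
  unfold TE; rw [if_neg h, if_neg h2, add_zero]

-- scalar identities for the tridiagonal LDL
lemma diag0 : pE 0 * pE 0 + 1 = dE 0 := by
  unfold pE dE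
  rw [SQ_succ, SQ_zero, lam_zero]
  norm_num
  ring
lemma diagS (w : ℕ) :
    pE (w+1) * pE (w+1) + 1 = dE (w+1) + tE w * (dE w * tE w) := by
  unfold pE dE tE pE
  rw [SQ_succ (w+1), SQ_succ w]
  have h1 := lam_ne_zero (w+1)
  have h2 := SQ_ne_zero w
  have h3 : SQ w + lam (w+1) ^ 2 ≠ 0 := by rw [← SQ_succ]; exact SQ_ne_zero (w+1)
  field_simp
  ring
lemma offd (a : ℕ) : pE (a+1) = dE a * tE a := by
  unfold pE dE tE pE
  have h1 := SQ_ne_zero a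
  have h2 := SQ_ne_zero (a+1)
  have h3 := lam_ne_zero (a+1)
  field_simp

-- entrywise version of Z Zᵀ = T (D Tᵀ)
lemma colC (n iv jv : ℕ) (hi : iv < n) (hj : jv < n) :
    ∑ k ∈ range (n+1), ZE iv k * ZE jv k = ∑ k ∈ range n, TE iv k * (dE k * TE jv k) := by
  have lhs : ∑ k ∈ range (n+1), ZE iv k * ZE jv k = pE iv * ZE jv iv + ZE jv (iv+1) := by
    have he : ∀ k, ZE iv k * ZE jv k
        = (if iv = k then pE iv * ZE jv k else 0) + (if iv + 1 = k then ZE jv k else 0) := by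
      intro k
      show ((if iv = k then pE iv else 0) + if iv + 1 = k then 1 else 0) * ZE jv k = _
      simp only [add_mul, ite_mul, zero_mul, one_mul]
    rw [Finset.sum_congr rfl fun k _ => he k, Finset.sum_add_distrib,
      Finset.sum_ite_eq (range (n+1)) iv (fun k => pE iv * ZE jv k),
      Finset.sum_ite_eq (range (n+1)) (iv+1) (fun k => ZE jv k),
      if_pos (mem_range.2 (by omega)), if_pos (mem_range.2 (by omega))]
  have he2 : ∀ k, TE iv k * (dE k * TE jv k)
      = (if iv = k then dE k * TE jv k else 0)
        + (if iv = k + 1 then tE k * (dE k * TE jv k) else 0) := by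
    intro k
    show ((if iv = k then (1:ℚ) else 0) + if iv = k + 1 then tE k else 0) * (dE k * TE jv k) = _
    simp only [add_mul, ite_mul, zero_mul, one_mul]
  rw [lhs, Finset.sum_congr rfl fun k _ => he2 k, Finset.sum_add_distrib,
    Finset.sum_ite_eq (range n) iv (fun k => dE k * TE jv k), if_pos (mem_range.2 hi)]
  cases iv with
  | zero =>
    rw [Finset.sum_eq_zero (fun k _ => if_neg (by omega)), add_zero]
    rcases Nat.lt_trichotomy jv 1 with h | h | h
    · have hjv : jv = 0 := by omega
      subst hjv
      rw [ZE_self, ZE_sup, TE_self, mul_one]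
      exact diag0
    · subst h
      rw [ZE_of_ne (by omega) (by omega), ZE_self, TE_sub, mul_zero, zero_add]
      exact offd 0
    · rw [ZE_of_ne (by omega) (by omega), ZE_of_ne (by omega) (by omega),
        TE_of_ne (by omega) (by omega), mul_zero, zero_add, mul_zero]
  | succ w =>
    have hs : (∑ k ∈ range n, if w + 1 = k + 1 then tE k * (dE k * TE jv k) else 0)
        = ∑ k ∈ range n, if w = k then tE k * (dE k * TE jv k) else 0 := by
      refine Finset.sum_congr rfl fun k _ => ?_
      congr 1
      simp
    rw [hs, Finset.sum_ite_eq (range n) w (fun k => tE k * (dE k * TE jv k)),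
      if_pos (mem_range.2 (by omega))]
    rcases Nat.lt_trichotomy jv (w+1) with h | h | h
    · rcases Nat.lt_trichotomy jv w with h2 | h2 | h2
      · -- jv < w : everything zero
        rw [ZE_of_ne (by omega) (by omega), ZE_of_ne (by omega) (by omega),
          TE_of_ne (by omega) (by omega), TE_of_ne (by omega) (by omega)]
        ring
      · -- jv = w
        subst h2
        rw [ZE_sup, ZE_of_ne (by omega) (by omega), TE_of_ne (by omega) (by omega),
          TE_self, mul_one, mul_zero, zero_add, add_zero, mul_one]
        rw [offd jv]
        ring
      · omega
    · -- diagonal jv = w+1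
      subst h
      rw [ZE_self, ZE_sup, TE_self, TE_sub, mul_one]
      exact diagS w
    · rcases Nat.lt_trichotomy jv (w+2) with h2 | h2 | h2
      · omega
      · -- jv = w+2
        subst h2
        have hZ1 : ZE (w+2) (w+1) = 0 := ZE_of_ne (by omega) (by omega)
        have hZ2 : ZE (w+2) (w+1+1) = pE (w+2) := ZE_self (w+2)
        have hT1 : TE (w+2) (w+1) = tE (w+1) := TE_sub (w+1)
        have hT2 : TE (w+2) w = 0 := TE_of_ne (by omega) (by omega)
        rw [hZ1, hZ2, hT1, hT2, mul_zero, zero_add, mul_zero, mul_zero, add_zero]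
        exact offd (w+1)
      · -- jv > w+2 : everything zero
        rw [ZE_of_ne (by omega) (by omega), ZE_of_ne (by omega) (by omega),
          TE_of_ne (by omega) (by omega), TE_of_ne (by omega) (by omega)]
        ring


noncomputable def Xm (n : ℕ) : Matrix (Fin n) (Fin (n+1)) ℚ := Matrix.of fun i k => XE i k
noncomputable def Lm (n : ℕ) : Matrix (Fin n) (Fin n) ℚ := Matrix.of fun i k => LpE i k
noncomputable def Zm (n : ℕ) : Matrix (Fin n) (Fin (n+1)) ℚ := Matrix.of fun j k => ZE j k
noncomputable def Tm (n : ℕ) : Matrix (Fin n) (Fin n) ℚ := Matrix.of fun i k => TE i k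
noncomputable def Dm (n : ℕ) : Matrix (Fin n) (Fin n) ℚ := Matrix.diagonal fun i => dE i

lemma factB (n : ℕ) : Xm n = Lm n * Zm n := by
  ext i k
  rw [Matrix.mul_apply]
  simp only [Xm, Lm, Zm, Matrix.of_apply]
  rw [Fin.sum_univ_eq_sum_range (fun j => LpE (i : ℕ) j * ZE j (k : ℕ)) n]
  exact (colB n i k i.isLt (Nat.lt_succ_iff.mp k.isLt)).symm

lemma factC (n : ℕ) : Zm n * (Zm n)ᵀ = Tm n * (Dm n * (Tm n)ᵀ) := by
  ext i j
  rw [Matrix.mul_apply, Matrix.mul_apply]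
  simp only [Zm, Tm, Dm, Matrix.of_apply, Matrix.transpose_apply, Matrix.diagonal_mul]
  rw [Fin.sum_univ_eq_sum_range (fun k => ZE (i : ℕ) k * ZE (j : ℕ) k) (n+1),
    Fin.sum_univ_eq_sum_range (fun k => TE (i : ℕ) k * (dE k * TE (j : ℕ) k)) n]
  exact colC n i j i.isLt j.isLt

lemma detLm (n : ℕ) : (Lm n).det = 1 := by
  rw [Matrix.det_of_lowerTriangular (Lm n)
    (fun i j h => LpE_eq_zero (show (i : ℕ) < (j : ℕ) from h))]
  refine Finset.prod_eq_one fun i _ => ?_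
  show LpE (i : ℕ) (i : ℕ) = 1
  unfold LpE
  rw [g_self, g_eq_zero (Nat.lt_succ_self _)]
  simp

lemma detTm (n : ℕ) : (Tm n).det = 1 := by
  rw [Matrix.det_of_lowerTriangular (Tm n)
    (fun i j h => by
      show TE (i : ℕ) (j : ℕ) = 0
      have hij : (i : ℕ) < (j : ℕ) := h
      unfold TE
      rw [if_neg (by omega), if_neg (by omega), add_zero])]
  refine Finset.prod_eq_one fun i _ => ?_
  show TE (i : ℕ) (i : ℕ) = 1
  unfold TE
  rw [if_pos rfl, if_neg (by omega), add_zero]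

lemma prod_dE : ∀ m : ℕ, ∏ i ∈ range m, dE i = SQ m := by
  intro m
  induction m with
  | zero => simp [SQ_zero]
  | succ m ih =>
    rw [Finset.prod_range_succ, ih]
    unfold dE
    rw [mul_div_assoc']
    exact mul_div_cancel_left₀ _ (SQ_ne_zero m)

lemma detDm (n : ℕ) : (Dm n).det = SQ n := by
  rw [Dm, Matrix.det_diagonal, Fin.prod_univ_eq_prod_range (fun i => dE i) n, prod_dE]


end HankelLucasAux

open Finset Matrix HankelLucasAux

/-- Eq. (1.4): for `n ≥ 1`,
`det(binom(2i+2j+2,i+j+1) + 2 binom(2i+2j+4,i+j+2) + binom(2i+2j+6,i+j+3))_{i,j=0}^{n-1}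
  = 2^n ∑_{j=0}^{n} L_{2j+1}²`. -/
theorem hankel_central_binomial_eq_sum_lucas_sq (n : ℕ) (hn : 0 < n) :
    Matrix.det (Matrix.of fun i j : Fin n =>
        (Nat.choose (2 * (i : ℕ) + 2 * (j : ℕ) + 2) ((i : ℕ) + (j : ℕ) + 1) : ℤ)
          + 2 * (Nat.choose (2 * (i : ℕ) + 2 * (j : ℕ) + 4) ((i : ℕ) + (j : ℕ) + 2) : ℤ)
          + (Nat.choose (2 * (i : ℕ) + 2 * (j : ℕ) + 6) ((i : ℕ) + (j : ℕ) + 3) : ℤ))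
      = 2 ^ n * ∑ j ∈ Finset.range (n + 1), lucas (2 * j + 1) ^ 2 := by
  set M : Matrix (Fin n) (Fin n) ℤ := Matrix.of fun i j : Fin n =>
        (Nat.choose (2 * (i : ℕ) + 2 * (j : ℕ) + 2) ((i : ℕ) + (j : ℕ) + 1) : ℤ)
          + 2 * (Nat.choose (2 * (i : ℕ) + 2 * (j : ℕ) + 4) ((i : ℕ) + (j : ℕ) + 2) : ℤ)
          + (Nat.choose (2 * (i : ℕ) + 2 * (j : ℕ) + 6) ((i : ℕ) + (j : ℕ) + 3) : ℤ) with hMdef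
  have factA : M.map (Int.castRingHom ℚ) = (2 : ℚ) • (Xm n * (Xm n)ᵀ) := by
    ext i j
    simp only [hMdef, Matrix.map_apply, Matrix.of_apply, Matrix.smul_apply, Matrix.mul_apply,
      Xm, Matrix.transpose_apply, smul_eq_mul]
    rw [Fin.sum_univ_eq_sum_range (fun k => XE (i : ℕ) k * XE (j : ℕ) k) (n+1)]
    have hN := entry (i : ℕ) (j : ℕ) (n+1) (by omega) (by omega)
    have hQ : (2:ℚ) * ∑ k ∈ range (n+1), XE (i : ℕ) k * XE (j : ℕ) k
        = ((2*(i:ℕ)+2*(j:ℕ)+2).choose ((i:ℕ)+(j:ℕ)+1) : ℚ)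
          + 2 * ((2*(i:ℕ)+2*(j:ℕ)+4).choose ((i:ℕ)+(j:ℕ)+2) : ℚ)
          + ((2*(i:ℕ)+2*(j:ℕ)+6).choose ((i:ℕ)+(j:ℕ)+3) : ℚ) := by
      unfold XE
      exact_mod_cast congrArg (Nat.cast : ℕ → ℚ) hN
    rw [hQ]
    simp only [Int.coe_castRingHom]
    push_cast
    ring
  have hdet : ((M.det : ℤ) : ℚ) = 2 ^ n * SQ n := by
    have h1 : ((M.det : ℤ) : ℚ) = (M.map (Int.castRingHom ℚ)).det := by
      rw [← RingHom.mapMatrix_apply, ← RingHom.map_det]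
      simp
    rw [h1, factA]
    have hXX : Xm n * (Xm n)ᵀ = Lm n * ((Tm n * (Dm n * (Tm n)ᵀ)) * (Lm n)ᵀ) := by
      rw [factB, Matrix.transpose_mul, Matrix.mul_assoc,
        ← Matrix.mul_assoc (Zm n) (Zm n)ᵀ (Lm n)ᵀ, factC]
    rw [hXX, Matrix.det_smul]
    simp only [Matrix.det_mul, Matrix.det_transpose, detLm, detTm, detDm,
      Fintype.card_fin, smul_eq_mul]
    ring
  have hrhs : ((2 ^ n * ∑ j ∈ Finset.range (n + 1), lucas (2 * j + 1) ^ 2 : ℤ) : ℚ)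
      = 2 ^ n * SQ n := by
    unfold SQ lam
    push_cast
    ring
  exact_mod_cast hdet.trans hrhs.symm
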